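/- Let y : ℤ → ℝ be a sequence of positive reals satisfying the q-Painlevé I recurrence y_{n+4} y_n (1/y_{n+2} + 1)^2 = (y_{n+3} + 1)(y_{n+1} + 1) for all n ∈ ℤ. Define c₁ := y_3 (1/y_1 + 1) / (y_0 (1/y_2 + 1)) and c₂ := y_2 y_1^2 y_0 / ((y_1 + 1) c₁). Then y satisfies the q-Painlevé I equation: for all n ∈ ℤ, y_{n+1} y_{n-1} = c₂ c₁^n (y_n + 1) / y_n^2 (where c₁^n denotes the integer power of the positive real c₁). -/

import Mathlib

/-- Positive solutions of the q-Painlevé I recurrence satisfy the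
q-Painlevé I equation `y (n+1) * y (n-1) = c₂ * c₁^n * (y n + 1) / (y n)^2`,
with `c₁ := y 3 * (1/y 1 + 1) / (y 0 * (1/y 2 + 1))` and
`c₂ := y 2 * (y 1)^2 * y 0 / ((y 1 + 1) * c₁)`. -/
theorem qPI_equation
    (y : ℤ → ℝ) (hy : ∀ n : ℤ, 0 < y n)
    (hrec : ∀ n : ℤ,
      y (n + 4) * y n * (1 / y (n + 2) + 1) ^ 2 = (y (n + 3) + 1) * (y (n + 1) + 1))
    (c₁ c₂ : ℝ)
    (hc₁ : c₁ = y 3 * (1 / y 1 + 1) / (y 0 * (1 / y 2 + 1)))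
    (hc₂ : c₂ = y 2 * (y 1) ^ 2 * y 0 / ((y 1 + 1) * c₁)) :
    ∀ n : ℤ, y (n + 1) * y (n - 1) = c₂ * c₁ ^ n * (y n + 1) / (y n) ^ 2 := by
  have hyne : ∀ n, y n ≠ 0 := fun n => (hy n).ne'
  have hy1 : ∀ n, y n + 1 ≠ 0 := fun n => by have := hy n; positivity
  set t : ℤ → ℝ := fun n => y (n + 1) * y (n - 1) * (y n) ^ 2 / (y n + 1) with ht
  have htpos : ∀ n, 0 < t n := by
    intro n
    simp only [ht]
    have h1 := hy (n + 1); have h2 := hy (n - 1); have h3 := hy n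
    positivity
  have htne : ∀ n, t n ≠ 0 := fun n => (htpos n).ne'
  have hc₁pos : 0 < c₁ := by
    rw [hc₁]
    have h0 := hy 0; have h1 := hy 1; have h2 := hy 2; have h3 := hy 3
    positivity
  have hc₁ne : c₁ ≠ 0 := hc₁pos.ne'
  -- key identity from the recurrence
  have hkey : ∀ n : ℤ, t (n + 2) * t n = t (n + 1) ^ 2 := by
    intro n
    have h := hrec (n - 1)
    have e1 : n - 1 + 4 = n + 3 := by ring
    have e2 : n - 1 + 2 = n + 1 := by ring
    have e3 : n - 1 + 3 = n + 2 := by ring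
    have e4 : n - 1 + 1 = n := by ring
    rw [e1, e2, e3, e4] at h
    simp only [ht]
    have e5 : n + 2 + 1 = n + 3 := by ring
    have e6 : n + 2 - 1 = n + 1 := by ring
    have e7 : n + 1 + 1 = n + 2 := by ring
    have e8 : n + 1 - 1 = n := by ring
    rw [e5, e6, e7, e8]
    have h1 := hyne (n + 1); have h2 := hyne (n + 2); have h3 := hyne n
    have h4 := hy1 (n + 2); have h5 := hy1 (n + 1); have h6 := hy1 n
    field_simp at h ⊢
    linear_combination h
  -- the ratio t(n+1)/t n is constant
  have hr : ∀ n : ℤ, t (n + 2) / t (n + 1) = t (n + 1) / t n := by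
    intro n
    rw [div_eq_div_iff (htne (n + 1)) (htne n)]
    linear_combination hkey n
  have hr1' : t 2 = c₁ * t 1 := by
    simp only [ht]
    norm_num
    rw [hc₁]
    have h0 := hy 0; have h1 := hy 1; have h2 := hy 2; have h3 := hy 3
    have g1 := hy1 1; have g2 := hy1 2
    have hd : y 0 * (1 / y 2 + 1) ≠ 0 := by positivity
    field_simp
    ring
  have hr1 : t 2 / t 1 = c₁ := by
    rw [hr1', mul_div_assoc, div_self (htne 1), mul_one]
  have hrall : ∀ n : ℤ, t (n + 1) / t n = c₁ := by
    have haux : ∀ n : ℤ, t (n + 1 + 1) / t (n + 1) = c₁ := by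
      intro n
      induction n using Int.induction_on with
      | zero => simpa using hr1
      | succ k ih =>
        have h := hr (k + 1)
        rw [show (k : ℤ) + 1 + 1 + 1 = k + 1 + 2 by ring, h]
        exact ih
      | pred k ih =>
        have h := hr (-(k : ℤ))
        rw [show -(k : ℤ) + 2 = -k + 1 + 1 by ring] at h
        rw [show -(k : ℤ) - 1 + 1 + 1 = -k + 1 by ring,
            show -(k : ℤ) - 1 + 1 = -k by ring, ← h]
        exact ih
    intro n
    have := haux (n - 1)
    rwa [show n - 1 + 1 = n by ring] at this
  have hrat : ∀ n : ℤ, t (n + 1) = c₁ * t n := by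
    intro n
    have := hrall n
    rw [div_eq_iff (htne n)] at this
    exact this
  -- initial values
  have ht1 : t 1 = c₂ * c₁ := by
    simp only [ht]
    norm_num
    rw [hc₂]
    have g1 := hy1 1
    field_simp
  have ht0 : t 0 = c₂ := by
    have h := hrat 0
    norm_num at h
    rw [ht1] at h
    have h2 : c₁ * c₂ = c₁ * t 0 := by linear_combination h
    exact (mul_left_cancel₀ hc₁ne h2).symm
  -- t n = c₂ * c₁ ^ n
  have htn : ∀ n : ℤ, t n = c₂ * c₁ ^ n := by
    intro n
    induction n using Int.induction_on with
    | zero => simpa using ht0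
    | succ k ih =>
      rw [hrat k, ih, zpow_add_one₀ hc₁ne]; ring
    | pred k ih =>
      have h := hrat (-(k : ℤ) - 1)
      rw [show -(k : ℤ) - 1 + 1 = -k by ring, ih] at h
      have h2 : t (-(k : ℤ) - 1) = c₂ * c₁ ^ (-(k : ℤ)) / c₁ := by
        rw [eq_div_iff hc₁ne]; linear_combination -h
      rw [h2, zpow_sub_one₀ hc₁ne]
      ring
  -- conclude
  intro n
  have h := htn n
  simp only [ht] at h
  rw [div_eq_iff (hy1 n)] at h
  rw [eq_div_iff (pow_ne_zero 2 (hyne n))]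
  linear_combination h
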